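/- arXiv:1803.04660 — 2 statements merged into one kernel-verified Lean document; each statement's English description precedes it below -/
import Mathlib

section
/- Let G be a finite connected simple graph and let U⪯ be the set of vertices x whose only tight upper certificate is x itself (i.e., the maximal elements of the relation u ⪯ x ⇔ e(u) = d(u,x) + e(x)). Then (1) U⪯ is a tight upper certificate of G, i.e., for every vertex u there exists x ∈ U⪯ with e(u) = d(u,x) + e(x), and (2) U⪯ is contained in every tight upper certificate of G; hence U⪯ is the unique tight upper certificate of minimum size. -/
/-- The eccentricity of a vertex `u`: the maximum shortest-path distance from `u`. -/
noncomputable def graphEcc {V : Type*} [Fintype V] (G : SimpleGraph V) (u : V) : ℕ :=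
  Finset.univ.sup (G.dist u)

lemma ecc_le_dist_add {V : Type*} [Fintype V] (G : SimpleGraph V) (hG : G.Connected)
    (u y : V) : graphEcc G u ≤ G.dist u y + graphEcc G y := by
  apply Finset.sup_le
  intro v _
  calc G.dist u v ≤ G.dist u y + G.dist y v := hG.dist_triangle
    _ ≤ G.dist u y + graphEcc G y := by
        exact Nat.add_le_add_left (Finset.le_sup (Finset.mem_univ v)) _

theorem optimal_tight_upper_certificate {V : Type*} [Fintype V] (G : SimpleGraph V)
    (hG : G.Connected)
    (UOpt : Set V)
    (hUOpt : UOpt = {x : V | ∀ y : V, graphEcc G x = G.dist x y + graphEcc G y → y = x}) :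
    (∀ u : V, ∃ x ∈ UOpt, graphEcc G u = G.dist u x + graphEcc G x) ∧
    (∀ U : Set V, (∀ u : V, ∃ x ∈ U, graphEcc G u = G.dist u x + graphEcc G x) →
      UOpt ⊆ U) ∧
    (∀ U : Set V, (∀ u : V, ∃ x ∈ U, graphEcc G u = G.dist u x + graphEcc G x) →
      UOpt.ncard ≤ U.ncard ∧ (U.ncard = UOpt.ncard → U = UOpt)) := by
  have h1 : ∀ u : V, ∃ x ∈ UOpt, graphEcc G u = G.dist u x + graphEcc G x := by
    intro u
    have hne : (Finset.univ.filter
        (fun x => graphEcc G u = G.dist u x + graphEcc G x)).Nonempty := by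
      refine ⟨u, ?_⟩
      simp [SimpleGraph.dist_self]
    obtain ⟨x, hx, hxmin⟩ := Finset.exists_min_image _ (fun x => graphEcc G x) hne
    simp only [Finset.mem_filter, Finset.mem_univ, true_and] at hx
    refine ⟨x, ?_, hx⟩
    rw [hUOpt]
    intro y hy
    by_contra hyx
    have hd : 0 < G.dist x y := hG.pos_dist_of_ne (Ne.symm hyx)
    have hey : graphEcc G y < graphEcc G x := by omega
    have huy : graphEcc G u = G.dist u y + graphEcc G y := by
      have hle : graphEcc G u ≤ G.dist u y + graphEcc G y := ecc_le_dist_add G hG u y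
      have hge : G.dist u y + graphEcc G y ≤ graphEcc G u := by
        have : G.dist u y ≤ G.dist u x + G.dist x y := hG.dist_triangle
        omega
      omega
    have := hxmin y (by simp [huy])
    omega
  have h2 : ∀ U : Set V, (∀ u : V, ∃ x ∈ U, graphEcc G u = G.dist u x + graphEcc G x) →
      UOpt ⊆ U := by
    intro U hU x hx
    obtain ⟨y, hyU, hy⟩ := hU x
    rw [hUOpt] at hx
    rwa [hx y hy] at hyU
  refine ⟨h1, h2, ?_⟩
  intro U hU
  have hsub := h2 U hU
  have hfin : U.Finite := Set.toFinite U
  constructor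
  · exact Set.ncard_le_ncard hsub hfin
  · intro hcard
    exact (Set.eq_of_subset_of_ncard_le hsub hcard.le hfin).symm
end

section
/- Let G be a finite connected δ-hyperbolic simple graph and let C^{2δ}(G) = {v : e(v) ≤ rad(G) + 2δ}. Then for every two vertices x, y ∈ C^{2δ}(G), d(x,y) ≤ 8δ + 1. -/
/-- The radius: the minimum eccentricity. -/
noncomputable def graphRad {V : Type*} [Fintype V] [Nonempty V] (G : SimpleGraph V) : ℕ :=
  Finset.univ.inf' Finset.univ_nonempty (graphEcc G)

/-- The diameter: the maximum eccentricity. -/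
noncomputable def graphDiam {V : Type*} [Fintype V] (G : SimpleGraph V) : ℕ :=
  Finset.univ.sup (graphEcc G)


/-- `G` is `δ`-hyperbolic: for any four vertices, the two larger of the three distance sums
differ by at most `2δ` (four-point condition). -/
def IsHyperbolic {V : Type*} (G : SimpleGraph V) (δ : ℝ) : Prop :=
  ∀ u v x y : V,
    (G.dist u v : ℝ) + (G.dist x y : ℝ) ≤
      max ((G.dist u x : ℝ) + (G.dist v y : ℝ)) ((G.dist u y : ℝ) + (G.dist v x : ℝ)) + 2 * δ

private lemma dist_getVert_le {V : Type*} (G : SimpleGraph V) (hG : G.Connected)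
    {u v : V} (p : G.Walk u v) :
    ∀ k : ℕ, G.dist u (p.getVert k) ≤ k := by
  intro k
  induction k with
  | zero => simp [SimpleGraph.Walk.getVert_zero]
  | succ k ih =>
    by_cases h : k < p.length
    · have hadj := p.adj_getVert_succ h
      have h1 : G.dist (p.getVert k) (p.getVert (k+1)) ≤ 1 := by
        rw [← SimpleGraph.dist_eq_one_iff_adj] at hadj
        omega
      have h2 := hG.dist_triangle (u := u) (v := p.getVert k) (w := p.getVert (k+1))
      omega
    · rw [p.getVert_of_length_le (by omega), ← p.getVert_of_length_le (le_of_not_gt h)]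
      omega

theorem hyperbolic_near_center_diam {V : Type*} [Fintype V] [Nonempty V] (G : SimpleGraph V)
    (hG : G.Connected) (δ : ℝ) (hδ : 0 ≤ δ) (hyp : IsHyperbolic G δ)
    (x y : V)
    (hx : (graphEcc G x : ℝ) ≤ (graphRad G : ℝ) + 2 * δ)
    (hy : (graphEcc G y : ℝ) ≤ (graphRad G : ℝ) + 2 * δ) :
    (G.dist x y : ℝ) ≤ 8 * δ + 1 := by
  obtain ⟨p, hp⟩ := hG.exists_walk_length_eq_dist x y
  set d := G.dist x y with hd
  set k := (d + 1) / 2 with hk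
  have hkled : k ≤ d := by omega
  set m := p.getVert k with hm
  have hxm : G.dist x m ≤ k := dist_getVert_le G hG p k
  have hym : G.dist y m ≤ d - k := by
    have := dist_getVert_le G hG p.reverse (d - k)
    rw [p.getVert_reverse] at this
    have hlen : p.length - (d - k) = k := by omega
    rwa [hlen] at this
  obtain ⟨z, hz⟩ := Finset.exists_mem_eq_sup Finset.univ Finset.univ_nonempty (G.dist m)
  have hradm : graphRad G ≤ G.dist m z := by
    have h1 : graphRad G ≤ graphEcc G m := Finset.inf'_le _ (Finset.mem_univ m)
    have h2 : graphEcc G m = G.dist m z := hz.2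
    omega
  have hxz : G.dist x z ≤ graphEcc G x := Finset.le_sup (Finset.mem_univ z)
  have hyz : G.dist y z ≤ graphEcc G y := Finset.le_sup (Finset.mem_univ z)
  have h4 := hyp x y m z
  have hmax : max ((G.dist x m : ℝ) + (G.dist y z : ℝ)) ((G.dist x z : ℝ) + (G.dist y m : ℝ))
      ≤ (k : ℝ) + (graphRad G : ℝ) + 2 * δ := by
    apply max_le
    · have h1 : (G.dist x m : ℝ) ≤ k := by exact_mod_cast hxm
      have h2 : (G.dist y z : ℝ) ≤ (graphRad G : ℝ) + 2 * δ :=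
        le_trans (by exact_mod_cast hyz) hy
      linarith
    · have h1 : (G.dist y m : ℝ) ≤ (k : ℝ) := by
        have : G.dist y m ≤ k := by omega
        exact_mod_cast this
      have h2 : (G.dist x z : ℝ) ≤ (graphRad G : ℝ) + 2 * δ :=
        le_trans (by exact_mod_cast hxz) hx
      linarith
  have hmz : (graphRad G : ℝ) ≤ (G.dist m z : ℝ) := by exact_mod_cast hradm
  have key : (d : ℝ) ≤ (k : ℝ) + 4 * δ := by
    have := le_trans h4 (by linarith : max ((G.dist x m : ℝ) + (G.dist y z : ℝ))
      ((G.dist x z : ℝ) + (G.dist y m : ℝ)) + 2 * δ ≤ (k : ℝ) + (graphRad G : ℝ) + 4 * δ)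
    linarith
  have h2k : (d : ℝ) ≤ 2 * (k : ℝ) - (if d % 2 = 0 then 0 else 1) := by
    rcases Nat.even_or_odd d with h | h
    · have h0 : d % 2 = 0 := Nat.even_iff.mp h
      have : 2 * k = d := by omega
      have : 2 * (k:ℝ) = d := by exact_mod_cast this
      simp [h0]; linarith
    · have h0 : d % 2 = 1 := Nat.odd_iff.mp h
      have : 2 * k = d + 1 := by omega
      have : 2 * (k:ℝ) = (d:ℝ) + 1 := by exact_mod_cast this
      simp [h0]; linarith
  rcases Nat.even_or_odd d with h | h
  · have h0 : d % 2 = 0 := Nat.even_iff.mp h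
    rw [if_pos h0] at h2k
    -- from d ≤ k + 4δ and 2k = d: d/2 ≤ 4δ, d ≤ 8δ ≤ 8δ+1
    have : 2 * k = d := by omega
    have h2 : 2 * (k:ℝ) = d := by exact_mod_cast this
    linarith
  · have h0 : d % 2 = 1 := Nat.odd_iff.mp h
    have : 2 * k = d + 1 := by omega
    have h2 : 2 * (k:ℝ) = (d:ℝ) + 1 := by exact_mod_cast this
    linarith
end
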